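/- Let K be an algebraically closed field of characteristic 0 and let A be the 3×8 matrix of linear forms in the variables x, y, t over K given by rows [x, y, t, 0, 0, 0, 0, 0], [0, 0, 0, x, y, t, 0, 0], [t, 0, 0, 0, t, 0, x, y]. Then: (i) rank A(p) = 3 for every p ∈ K³ \ {0}; (ii) the 8 columns of A are linearly independent over K; (iii) for every 2-dimensional subspace W ⊆ K³ the space {v ∈ K⁸ : A(w)·v = 0 for all w ∈ W} has dimension exactly 2. (This is the first claim of Example 9: A defines a 1-type uniform Steiner bundle of rank 5 on P² with c₁ = −3 and splitting type (−1³, 0²) on every line.) -/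

import Mathlib

open Matrix

/-- The explicit `3 × 8` matrix of linear forms of Example 9, evaluated at
`(x, y, t) = (p 0, p 1, p 2)`. -/
def A9 {K : Type*} [CommRing K] (p : Fin 3 → K) : Matrix (Fin 3) (Fin 8) K :=
  !![p 0, p 1, p 2, 0, 0, 0, 0, 0;
     0, 0, 0, p 0, p 1, p 2, 0, 0;
     p 2, 0, 0, 0, p 2, 0, p 0, p 1]

namespace Stmt9Aux

@[simp] lemma cons_val_five {α : Type*} {m : ℕ} (x : α)
    (u : Fin m.succ.succ.succ.succ.succ → α) :
    vecCons x u 5 = vecHead (vecTail (vecTail (vecTail (vecTail u)))) := rfl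
@[simp] lemma cons_val_six {α : Type*} {m : ℕ} (x : α)
    (u : Fin m.succ.succ.succ.succ.succ.succ → α) :
    vecCons x u 6 = vecHead (vecTail (vecTail (vecTail (vecTail (vecTail u))))) := rfl
@[simp] lemma cons_val_seven {α : Type*} {m : ℕ} (x : α)
    (u : Fin m.succ.succ.succ.succ.succ.succ.succ → α) :
    vecCons x u 7 = vecHead (vecTail (vecTail (vecTail (vecTail (vecTail (vecTail u)))))) := rfl

variable {K : Type*} [Field K]

lemma A9_vecMul (p c : Fin 3 → K) :
    c ᵥ* (A9 p) = ![c 0 * p 0 + c 2 * p 2, c 0 * p 1, c 0 * p 2, c 1 * p 0,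
      c 1 * p 1 + c 2 * p 2, c 1 * p 2, c 2 * p 0, c 2 * p 1] := by
  ext j
  fin_cases j <;> simp [A9, Matrix.vecMul, dotProduct, Fin.sum_univ_three, Matrix.vecHead, Matrix.vecTail]

lemma A9_mulVec (p : Fin 3 → K) (v : Fin 8 → K) :
    (A9 p) *ᵥ v = ![p 0 * v 0 + p 1 * v 1 + p 2 * v 2,
                    p 0 * v 3 + p 1 * v 4 + p 2 * v 5,
                    p 2 * v 0 + p 2 * v 4 + p 0 * v 6 + p 1 * v 7] := by
  ext i
  fin_cases i <;> simp [A9, Matrix.mulVec, dotProduct, Fin.sum_univ_eight, Matrix.vecHead, Matrix.vecTail]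

lemma A9_combo (cc dd : K) (a b : Fin 3 → K) :
    A9 (cc • a + dd • b) = cc • A9 a + dd • A9 b := by
  ext i j
  fin_cases i <;> fin_cases j <;>
    simp [A9, Pi.add_apply, Pi.smul_apply, smul_eq_mul, Matrix.vecHead, Matrix.vecTail]

lemma rank_eq_card_of_vecMul_injective {m n : Type*} [Fintype m] [Fintype n]
    (M : Matrix m n K) (h : ∀ c : m → K, c ᵥ* M = 0 → c = 0) :
    M.rank = Fintype.card m := by
  rw [← Matrix.rank_transpose]
  have hker : LinearMap.ker Mᵀ.mulVecLin = ⊥ := by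
    rw [LinearMap.ker_eq_bot']
    intro c hc
    exact h c (by rwa [Matrix.mulVecLin_apply, Matrix.mulVec_transpose] at hc)
  have h2 := LinearMap.finrank_range_add_finrank_ker Mᵀ.mulVecLin
  rw [hker, finrank_bot, add_zero, Module.finrank_pi] at h2
  rw [Matrix.rank, h2]

lemma part1 (p : Fin 3 → K) (hp : p ≠ 0) : (A9 p).rank = 3 := by
  have key : ∀ c : Fin 3 → K, c ᵥ* (A9 p) = 0 → c = 0 := by
    intro c hc
    rw [A9_vecMul] at hc
    have e0 : c 0 * p 0 + c 2 * p 2 = 0 := congrFun hc 0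
    have e1 : c 0 * p 1 = 0 := congrFun hc 1
    have e2 : c 0 * p 2 = 0 := congrFun hc 2
    have e3 : c 1 * p 0 = 0 := congrFun hc 3
    have e4 : c 1 * p 1 + c 2 * p 2 = 0 := congrFun hc 4
    have e5 : c 1 * p 2 = 0 := congrFun hc 5
    have e6 : c 2 * p 0 = 0 := congrFun hc 6
    have e7 : c 2 * p 1 = 0 := congrFun hc 7
    have hp3 : p 0 ≠ 0 ∨ p 1 ≠ 0 ∨ p 2 ≠ 0 := by
      by_contra h
      push_neg at h
      exact hp (funext fun i => by fin_cases i <;> simp [h.1, h.2.1, h.2.2])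
    have hc3 : c 0 = 0 ∧ c 1 = 0 ∧ c 2 = 0 := by
      by_cases h2 : p 2 = 0
      · by_cases h1 : p 1 = 0
        · have h0 : p 0 ≠ 0 := by tauto
          refine ⟨?_, ?_, ?_⟩
          · have := e0; rw [h2, mul_zero, add_zero] at this
            exact (mul_eq_zero.mp this).resolve_right h0
          · exact (mul_eq_zero.mp e3).resolve_right h0
          · exact (mul_eq_zero.mp e6).resolve_right h0
        · refine ⟨(mul_eq_zero.mp e1).resolve_right h1, ?_,
            (mul_eq_zero.mp e7).resolve_right h1⟩
          have := e4; rw [h2, mul_zero, add_zero] at this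
          exact (mul_eq_zero.mp this).resolve_right h1
      · have hc0 : c 0 = 0 := (mul_eq_zero.mp e2).resolve_right h2
        have hc1 : c 1 = 0 := (mul_eq_zero.mp e5).resolve_right h2
        have hc2 : c 2 = 0 := by
          have := e0; rw [hc0, zero_mul, zero_add] at this
          exact (mul_eq_zero.mp this).resolve_right h2
        exact ⟨hc0, hc1, hc2⟩
      
    funext i
    fin_cases i
    · exact hc3.1
    · exact hc3.2.1
    · exact hc3.2.2
  have := rank_eq_card_of_vecMul_injective (A9 p) key
  simpa using this

lemma part2 (v : Fin 8 → K) (hv : ∀ p : Fin 3 → K, (A9 p) *ᵥ v = 0) : v = 0 := by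
  have h0 := hv ![1,0,0]
  have h1 := hv ![0,1,0]
  have h2 := hv ![0,0,1]
  rw [A9_mulVec] at h0 h1 h2
  have e00 : v 0 = 0 := by simpa using congrFun h0 0
  have e01 : v 3 = 0 := by simpa using congrFun h0 1
  have e02 : v 6 = 0 := by simpa using congrFun h0 2
  have e10 : v 1 = 0 := by simpa using congrFun h1 0
  have e11 : v 4 = 0 := by simpa using congrFun h1 1
  have e12 : v 7 = 0 := by simpa using congrFun h1 2
  have e20 : v 2 = 0 := by simpa using congrFun h2 0
  have e21 : v 5 = 0 := by simpa using congrFun h2 1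
  funext i
  fin_cases i <;> assumption

lemma part3 (W : Submodule K (Fin 3 → K)) (hW : Module.finrank K W = 2) :
    Module.finrank K
      (⨅ w ∈ W, LinearMap.ker (A9 w).mulVecLin : Submodule K (Fin 8 → K)) = 2 := by
  classical
  -- basis of W
  let B := Module.finBasisOfFinrankEq K W hW
  set a : Fin 3 → K := (B 0 : Fin 3 → K) with ha_def
  set b : Fin 3 → K := (B 1 : Fin 3 → K) with hb_def
  have ha : a ∈ W := (B 0).2
  have hb : b ∈ W := (B 1).2
  have hrange : (Set.range fun i : Fin 2 => ((B i : Fin 3 → K))) = {a, b} := by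
    ext z
    simp only [Set.mem_range, Set.mem_insert_iff, Set.mem_singleton_iff]
    constructor
    · rintro ⟨i, rfl⟩; fin_cases i
      · exact Or.inl rfl
      · exact Or.inr rfl
    · rintro (rfl | rfl)
      · exact ⟨0, rfl⟩
      · exact ⟨1, rfl⟩
  have hW_span : W = Submodule.span K {a, b} := by
    conv_lhs => rw [← Submodule.map_subtype_top W, ← B.span_eq]
    rw [Submodule.map_span, ← Set.range_comp]
    exact congrArg (Submodule.span K) hrange
  -- linear independence of a, b
  have hli : ∀ cc dd : K, cc • a + dd • b = 0 → cc = 0 ∧ dd = 0 := by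
    intro cc dd h
    have hB : LinearIndependent K (W.subtype ∘ B) :=
      B.linearIndependent.map' W.subtype (Submodule.ker_subtype W)
    have h2 := Fintype.linearIndependent_iff.mp hB ![cc, dd] (by
      rw [Fin.sum_univ_two]
      exact h)
    exact ⟨h2 0, h2 1⟩
  -- reduce the infimum to two kernels
  have hinf : (⨅ w ∈ W, LinearMap.ker (A9 w).mulVecLin : Submodule K (Fin 8 → K))
      = LinearMap.ker (A9 a).mulVecLin ⊓ LinearMap.ker (A9 b).mulVecLin := by
    apply le_antisymm
    · exact le_inf (biInf_le _ ha) (biInf_le _ hb)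
    · refine le_iInf fun w => le_iInf fun hw => ?_
      rw [hW_span] at hw
      obtain ⟨cc, dd, rfl⟩ := Submodule.mem_span_pair.mp hw
      intro v hv
      obtain ⟨hva, hvb⟩ := Submodule.mem_inf.mp hv
      rw [LinearMap.mem_ker, Matrix.mulVecLin_apply] at hva hvb ⊢
      rw [A9_combo, Matrix.add_mulVec, Matrix.smul_mulVec,
        Matrix.smul_mulVec, hva, hvb, smul_zero, smul_zero, add_zero]
  -- the stacked matrix
  set M : Matrix (Fin 3 ⊕ Fin 3) (Fin 8) K := Matrix.fromRows (A9 a) (A9 b) with hM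
  have hkerM : LinearMap.ker M.mulVecLin
      = LinearMap.ker (A9 a).mulVecLin ⊓ LinearMap.ker (A9 b).mulVecLin := by
    ext v
    simp only [LinearMap.mem_ker, Matrix.mulVecLin_apply, Submodule.mem_inf, hM,
      Matrix.fromRows_mulVec]
    constructor
    · intro h
      exact ⟨funext fun i => congrFun h (Sum.inl i), funext fun i => congrFun h (Sum.inr i)⟩
    · rintro ⟨h1, h2⟩
      funext i
      rcases i with i | i
      · exact congrFun h1 i
      · exact congrFun h2 i
  -- rank of M is 6
  have hrankM : M.rank = 6 := by
    have key : ∀ x : Fin 3 ⊕ Fin 3 → K, x ᵥ* M = 0 → x = 0 := by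
      intro x hx
      set c : Fin 3 → K := x ∘ Sum.inl with hc
      set d : Fin 3 → K := x ∘ Sum.inr with hd
      have hx' : c ᵥ* (A9 a) + d ᵥ* (A9 b) = 0 := by
        rw [← Matrix.sumElim_vecMul_fromRows]
        rw [show Sum.elim c d = x from funext fun i => by rcases i with i|i <;> rfl]
        exact hx
      rw [A9_vecMul, A9_vecMul] at hx'
      have e0 : c 0 * a 0 + c 2 * a 2 + (d 0 * b 0 + d 2 * b 2) = 0 := congrFun hx' 0
      have e1 : c 0 * a 1 + d 0 * b 1 = 0 := congrFun hx' 1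
      have e2 : c 0 * a 2 + d 0 * b 2 = 0 := congrFun hx' 2
      have e3 : c 1 * a 0 + d 1 * b 0 = 0 := congrFun hx' 3
      have e4 : c 1 * a 1 + c 2 * a 2 + (d 1 * b 1 + d 2 * b 2) = 0 := congrFun hx' 4
      have e5 : c 1 * a 2 + d 1 * b 2 = 0 := congrFun hx' 5
      have e6 : c 2 * a 0 + d 2 * b 0 = 0 := congrFun hx' 6
      have e7 : c 2 * a 1 + d 2 * b 1 = 0 := congrFun hx' 7
      by_cases hs : c 2 * a 2 + d 2 * b 2 = 0
      · -- all three combination vectors vanish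
        have hu : c 0 • a + d 0 • b = 0 := by
          funext j
          fin_cases j
          · show c 0 * a 0 + d 0 * b 0 = 0; linear_combination e0 - hs
          · show c 0 * a 1 + d 0 * b 1 = 0; linear_combination e1
          · show c 0 * a 2 + d 0 * b 2 = 0; linear_combination e2
        have hv : c 1 • a + d 1 • b = 0 := by
          funext j
          fin_cases j
          · show c 1 * a 0 + d 1 * b 0 = 0; linear_combination e3
          · show c 1 * a 1 + d 1 * b 1 = 0; linear_combination e4 - hs
          · show c 1 * a 2 + d 1 * b 2 = 0; linear_combination e5
        have hw : c 2 • a + d 2 • b = 0 := by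
          funext j
          fin_cases j
          · show c 2 * a 0 + d 2 * b 0 = 0; linear_combination e6
          · show c 2 * a 1 + d 2 * b 1 = 0; linear_combination e7
          · show c 2 * a 2 + d 2 * b 2 = 0; linear_combination hs
        obtain ⟨hc0, hd0⟩ := hli _ _ hu
        obtain ⟨hc1, hd1⟩ := hli _ _ hv
        obtain ⟨hc2, hd2⟩ := hli _ _ hw
        funext i
        rcases i with i | i <;> fin_cases i <;> assumption
      · -- W would be all of K³, contradiction
        exfalso
        have humem : c 0 • a + d 0 • b ∈ W := by
          rw [hW_span]; exact Submodule.mem_span_pair.mpr ⟨c 0, d 0, rfl⟩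
        have hvmem : c 1 • a + d 1 • b ∈ W := by
          rw [hW_span]; exact Submodule.mem_span_pair.mpr ⟨c 1, d 1, rfl⟩
        have hwmem : c 2 • a + d 2 • b ∈ W := by
          rw [hW_span]; exact Submodule.mem_span_pair.mpr ⟨c 2, d 2, rfl⟩
        have m00 : c 0 * a 0 + d 0 * b 0 = -(c 2 * a 2 + d 2 * b 2) := by linear_combination e0
        have m11 : c 1 * a 1 + d 1 * b 1 = -(c 2 * a 2 + d 2 * b 2) := by linear_combination e4
        have htop : ∀ z : Fin 3 → K, z ∈ W := by
          intro z
          have hz : z = (-(z 0) / (c 2 * a 2 + d 2 * b 2)) • (c 0 • a + d 0 • b)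
              + (-(z 1) / (c 2 * a 2 + d 2 * b 2)) • (c 1 • a + d 1 • b)
              + (z 2 / (c 2 * a 2 + d 2 * b 2)) • (c 2 • a + d 2 • b) := by
            funext j
            fin_cases j
            · show z 0 = -(z 0) / (c 2 * a 2 + d 2 * b 2) * (c 0 * a 0 + d 0 * b 0)
                + -(z 1) / (c 2 * a 2 + d 2 * b 2) * (c 1 * a 0 + d 1 * b 0)
                + z 2 / (c 2 * a 2 + d 2 * b 2) * (c 2 * a 0 + d 2 * b 0)
              rw [m00, e3, e6]
              field_simp
              ring
            · show z 1 = -(z 0) / (c 2 * a 2 + d 2 * b 2) * (c 0 * a 1 + d 0 * b 1)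
                + -(z 1) / (c 2 * a 2 + d 2 * b 2) * (c 1 * a 1 + d 1 * b 1)
                + z 2 / (c 2 * a 2 + d 2 * b 2) * (c 2 * a 1 + d 2 * b 1)
              rw [m11, e1, e7]
              field_simp
              ring
            · show z 2 = -(z 0) / (c 2 * a 2 + d 2 * b 2) * (c 0 * a 2 + d 0 * b 2)
                + -(z 1) / (c 2 * a 2 + d 2 * b 2) * (c 1 * a 2 + d 1 * b 2)
                + z 2 / (c 2 * a 2 + d 2 * b 2) * (c 2 * a 2 + d 2 * b 2)
              rw [e2, e5]
              field_simp
              ring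
          rw [hz]
          exact W.add_mem (W.add_mem (W.smul_mem _ humem) (W.smul_mem _ hvmem))
            (W.smul_mem _ hwmem)
        have hWtop : W = ⊤ := Submodule.eq_top_iff'.mpr htop
        rw [hWtop, finrank_top, Module.finrank_pi, Fintype.card_fin] at hW
        omega
    have := rank_eq_card_of_vecMul_injective M key
    simpa using this
  -- conclude by rank-nullity
  rw [hinf, ← hkerM]
  have h1 := LinearMap.finrank_range_add_finrank_ker M.mulVecLin
  rw [Module.finrank_pi, Fintype.card_fin, ← Matrix.rank, hrankM] at h1
  omega

end Stmt9Aux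


/-- **Example 9 (first claim).** The explicit `3 × 8` matrix `A` with rows
`[x, y, t, 0, 0, 0, 0, 0]`, `[0, 0, 0, x, y, t, 0, 0]`, `[t, 0, 0, 0, t, 0, x, y]`
defines a 1-type uniform Steiner bundle of rank 5 on P² with `c₁ = −3`:
(i) `A(p)` has rank 3 for every `p ≠ 0`; (ii) the 8 columns of `A` are linearly
independent over `K`; (iii) for every 2-dimensional subspace `W ⊆ K³` the common
kernel of the evaluations `A(w)`, `w ∈ W`, has dimension exactly 2
(splitting type `(−1³, 0²)` on every line). -/
theorem stmt9 {K : Type*} [Field K] [IsAlgClosed K] [CharZero K] :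
    (∀ p : Fin 3 → K, p ≠ 0 → (A9 p).rank = 3) ∧
    (∀ v : Fin 8 → K, (∀ p : Fin 3 → K, (A9 p).mulVec v = 0) → v = 0) ∧
    (∀ W : Submodule K (Fin 3 → K), Module.finrank K W = 2 →
      Module.finrank K
        (⨅ w ∈ W, LinearMap.ker (A9 w).mulVecLin : Submodule K (Fin 8 → K)) = 2) := by
  exact ⟨fun p hp => Stmt9Aux.part1 p hp, fun v hv => Stmt9Aux.part2 v hv,
    fun W hW => Stmt9Aux.part3 W hW⟩
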